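/- Any configuration in which every window of q consecutive sites contains exactly p ones is a fixed point of the modified majority rule. -/
import Mathlib


open Finset

/-- Number of sites in state one (cars) in a configuration. -/
def onesCount {N : ℕ} [NeZero N] (x : ZMod N → Fin 2) : ℕ :=
  (Finset.univ.filter (fun i => x i = 1)).card

/-- Number of ones in the window of `q` consecutive sites starting at `i`. -/
def wcount (q : ℕ) {N : ℕ} (x : ZMod N → Fin 2) (i : ZMod N) : ℕ :=
  ((Finset.range q).filter (fun j : ℕ => x (i + (j : ZMod N)) = 1)).card

/-- Moving condition of the modified traffic rule: the car at `i` may move right iff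
site `i+1` is empty and at most `p-1` of the `q-1` sites `i+1, …, i+q-1` are occupied. -/
abbrev canMove (p q : ℕ) {N : ℕ} (x : ZMod N → Fin 2) (i : ZMod N) : Prop :=
  x (i + 1) = 0 ∧
    ((Finset.range (q - 1)).filter (fun j : ℕ => x (i + 1 + (j : ZMod N)) = 1)).card ≤ p - 1

/-- One parallel update of the modified traffic rule. -/
def traffic (p q : ℕ) {N : ℕ} (x : ZMod N → Fin 2) : ZMod N → Fin 2 :=
  fun i =>
    if (x i = 1 ∧ ¬ canMove p q x i) ∨ (x (i - 1) = 1 ∧ canMove p q x (i - 1)) then 1 else 0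

/-- Number of ones among the `2q+1` sites `i-q, …, i+q`. -/
def nbhdCount (q : ℕ) {N : ℕ} (x : ZMod N → Fin 2) (i : ZMod N) : ℕ :=
  ((Finset.range (2 * q + 1)).filter (fun j : ℕ => x (i - (q : ZMod N) + (j : ZMod N)) = 1)).card

/-- One parallel update of the modified majority rule. -/
def majority (p q : ℕ) {N : ℕ} (x : ZMod N → Fin 2) : ZMod N → Fin 2 :=
  fun i => if 2 * p + 1 ≤ nbhdCount q x i then 1 else 0


lemma nbhd_split' (q : ℕ) {N : ℕ} (x : ZMod N → Fin 2) (i : ZMod N) :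
    nbhdCount q x i
      = wcount q x (i - q) + ((if x i = 1 then 1 else 0) + wcount q x (i + 1)) := by
  unfold nbhdCount wcount
  rw [Finset.card_filter, Finset.card_filter, Finset.card_filter]
  have h2 : 2 * q + 1 = q + (1 + q) := by ring
  rw [h2, Finset.sum_range_add, Finset.sum_range_add]
  congr 1
  congr 1
  · rw [Finset.sum_range_one]
    have : i - (q : ZMod N) + ((q + 0 : ℕ) : ZMod N) = i := by push_cast; ring
    rw [this]
  · apply Finset.sum_congr rfl
    intro j _
    have : i - (q : ZMod N) + ((q + (1 + j) : ℕ) : ZMod N) = i + 1 + (j : ZMod N) := by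
      push_cast; ring
    rw [this]

/-- a configuration whose every `q`-window contains exactly `p` ones
is a fixed point of the modified majority rule. -/
theorem majority_fixed_of_exact_windows {N : ℕ} [NeZero N] (p q : ℕ) (hp : 0 < p)
    (hpq : p < q) (hco : Nat.Coprime p q) (hdvd : q ∣ N) (hN : 2 * q + 1 ≤ N)
    (x : ZMod N → Fin 2) (hw : ∀ i, wcount q x i = p) :
    majority p q x = x := by
  funext i
  have h := nbhd_split' q x i
  rw [hw, hw] at h
  have hx : x i = 0 ∨ x i = 1 := by omega
  rcases hx with hx | hx <;> simp [majority, h, hx] <;> omega
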